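/- arXiv:1907.05229 — 4 statements merged into one kernel-verified Lean document; each statement's English description precedes it below -/
import Mathlib

section
/- In a weak bialgebra H, every element of the image of Π^L commutes with every element of the image of Π^R; i.e., if l ∈ H^L := Π^L(H) and h ∈ H^R := Π^R(H), then hl = lh. -/
open TensorProduct

namespace WeakHopfPaper

variable (k H : Type*) [Field k] [Ring H] [Algebra k H] [Coalgebra k H]

/-- `Π^L h = ε(1⁽¹⁾ h) • 1⁽²⁾`, built as `(ε ⊗ id)(Δ(1) · (h ⊗ 1))`. -/
noncomputable def PiL : H →ₗ[k] H :=
  (TensorProduct.lid k H).toLinearMap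
    ∘ₗ TensorProduct.map (Coalgebra.counit (R := k)) LinearMap.id
    ∘ₗ LinearMap.mulLeft k (Coalgebra.comul (R := k) (1 : H))
    ∘ₗ (TensorProduct.mk k H H).flip 1

/-- `Π^R h = 1⁽¹⁾ • ε(h 1⁽²⁾)`, built as `(id ⊗ ε)((1 ⊗ h) · Δ(1))`. -/
noncomputable def PiR : H →ₗ[k] H :=
  (TensorProduct.rid k H).toLinearMap
    ∘ₗ TensorProduct.map LinearMap.id (Coalgebra.counit (R := k))
    ∘ₗ LinearMap.mulRight k (Coalgebra.comul (R := k) (1 : H))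
    ∘ₗ TensorProduct.mk k H H 1

/-- `Π̄^L h = 1⁽¹⁾ • ε(1⁽²⁾ h)`, built as `(id ⊗ ε)(Δ(1) · (1 ⊗ h))`. -/
noncomputable def PiLbar : H →ₗ[k] H :=
  (TensorProduct.rid k H).toLinearMap
    ∘ₗ TensorProduct.map LinearMap.id (Coalgebra.counit (R := k))
    ∘ₗ LinearMap.mulLeft k (Coalgebra.comul (R := k) (1 : H))
    ∘ₗ TensorProduct.mk k H H 1

/-- `Π̄^R h = ε(h 1⁽¹⁾) • 1⁽²⁾`, built as `(ε ⊗ id)((h ⊗ 1) · Δ(1))`. -/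
noncomputable def PiRbar : H →ₗ[k] H :=
  (TensorProduct.lid k H).toLinearMap
    ∘ₗ TensorProduct.map (Coalgebra.counit (R := k)) LinearMap.id
    ∘ₗ LinearMap.mulRight k (Coalgebra.comul (R := k) (1 : H))
    ∘ₗ (TensorProduct.mk k H H).flip 1

/-- A weak bialgebra: an algebra and coalgebra such that `Δ` is multiplicative,
`Δ²(1) = (Δ(1)⊗1)(1⊗Δ(1)) = (1⊗Δ(1))(Δ(1)⊗1)` and
`ε(hlm) = ε(h l⁽¹⁾)ε(l⁽²⁾ m) = ε(h l⁽²⁾)ε(l⁽¹⁾ m)`. -/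
class WeakBialgebra : Prop where
  comul_mul : ∀ x y : H,
    Coalgebra.comul (R := k) (x * y) =
      Coalgebra.comul (R := k) x * Coalgebra.comul (R := k) y
  comul_one_left :
    (TensorProduct.map (Coalgebra.comul (R := k)) LinearMap.id)
        (Coalgebra.comul (R := k) (1 : H)) =
      (Coalgebra.comul (R := k) (1 : H) ⊗ₜ[k] (1 : H)) *
        ((TensorProduct.assoc k H H H).symm
          ((1 : H) ⊗ₜ[k] Coalgebra.comul (R := k) (1 : H)))
  comul_one_right :
    (TensorProduct.map (Coalgebra.comul (R := k)) LinearMap.id)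
        (Coalgebra.comul (R := k) (1 : H)) =
      ((TensorProduct.assoc k H H H).symm
          ((1 : H) ⊗ₜ[k] Coalgebra.comul (R := k) (1 : H))) *
        (Coalgebra.comul (R := k) (1 : H) ⊗ₜ[k] (1 : H))
  counit_left : ∀ h l m : H,
    Coalgebra.counit (R := k) (h * l * m) =
      LinearMap.mul' k k
        ((TensorProduct.map
          (Coalgebra.counit (R := k) ∘ₗ LinearMap.mulLeft k h)
          (Coalgebra.counit (R := k) ∘ₗ LinearMap.mulRight k m))
          (Coalgebra.comul (R := k) l))
  counit_right : ∀ h l m : H,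
    Coalgebra.counit (R := k) (h * l * m) =
      LinearMap.mul' k k
        ((TensorProduct.map
          (Coalgebra.counit (R := k) ∘ₗ LinearMap.mulLeft k h)
          (Coalgebra.counit (R := k) ∘ₗ LinearMap.mulRight k m))
          ((TensorProduct.comm k H H) (Coalgebra.comul (R := k) l)))



section Aux

variable {k H}

/-- `f a u = (ε ⊗ id)(u · (a ⊗ 1))` -/
noncomputable def auxF (a : H) (u : H ⊗[k] H) : H :=
  (TensorProduct.lid k H)
    ((TensorProduct.map (Coalgebra.counit (R := k)) LinearMap.id) (u * (a ⊗ₜ[k] (1 : H))))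

/-- `g b v = (id ⊗ ε)((1 ⊗ b) · v)` -/
noncomputable def auxG (b : H) (v : H ⊗[k] H) : H :=
  (TensorProduct.rid k H)
    ((TensorProduct.map LinearMap.id (Coalgebra.counit (R := k))) (((1 : H) ⊗ₜ[k] b) * v))

/-- `Φ a b ((x⊗y)⊗w) = ε(x a) • y • ε(b w)` -/
noncomputable def auxPhi (a b : H) : (H ⊗[k] H) ⊗[k] H →ₗ[k] H :=
  (TensorProduct.rid k H).toLinearMap
    ∘ₗ TensorProduct.map
        ((TensorProduct.lid k H).toLinearMap
          ∘ₗ TensorProduct.map (Coalgebra.counit (R := k) ∘ₗ LinearMap.mulRight k a)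
              LinearMap.id)
        (Coalgebra.counit (R := k) ∘ₗ LinearMap.mulLeft k b)

lemma auxPhi_tmul (a b x y w : H) :
    auxPhi a b ((x ⊗ₜ[k] y) ⊗ₜ[k] w) =
      Coalgebra.counit (R := k) (b * w) •
        (Coalgebra.counit (R := k) (x * a) • y) := by
  simp [auxPhi]

lemma auxF_tmul (a x y : H) :
    auxF a (x ⊗ₜ[k] y) = Coalgebra.counit (R := k) (x * a) • y := by
  simp [auxF, Algebra.TensorProduct.tmul_mul_tmul]

lemma auxG_tmul (b z w : H) :
    auxG b (z ⊗ₜ[k] w) = Coalgebra.counit (R := k) (b * w) • z := by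
  simp [auxG, Algebra.TensorProduct.tmul_mul_tmul]

lemma auxF_add (a : H) (u₁ u₂ : H ⊗[k] H) :
    auxF a (u₁ + u₂) = auxF a u₁ + auxF a u₂ := by
  simp [auxF, add_mul]

lemma auxG_add (b : H) (v₁ v₂ : H ⊗[k] H) :
    auxG b (v₁ + v₂) = auxG b v₁ + auxG b v₂ := by
  simp [auxG, mul_add]

lemma key_left (a b : H) (u v : H ⊗[k] H) :
    auxPhi a b ((u ⊗ₜ[k] (1 : H)) *
        ((TensorProduct.assoc k H H H).symm ((1 : H) ⊗ₜ[k] v))) =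
      auxF a u * auxG b v := by
  induction u using TensorProduct.induction_on with
  | zero =>
    rw [zero_tmul, zero_mul, map_zero]
    simp [auxF]
  | tmul x y =>
    induction v using TensorProduct.induction_on with
    | zero =>
      rw [tmul_zero, map_zero, mul_zero, map_zero]
      simp [auxG]
    | tmul z w =>
      rw [TensorProduct.assoc_symm_tmul]
      rw [Algebra.TensorProduct.tmul_mul_tmul, Algebra.TensorProduct.tmul_mul_tmul]
      simp only [auxPhi_tmul, auxF_tmul, auxG_tmul, one_mul, mul_one]
      rw [smul_mul_assoc, mul_smul_comm]
      exact smul_comm _ _ _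
    | add v₁ v₂ h₁ h₂ =>
      rw [tmul_add, map_add, mul_add, map_add, h₁, h₂, auxG_add, mul_add]
  | add u₁ u₂ h₁ h₂ =>
    rw [add_tmul, add_mul, map_add, h₁, h₂, auxF_add, add_mul]

lemma key_right (a b : H) (u v : H ⊗[k] H) :
    auxPhi a b (((TensorProduct.assoc k H H H).symm ((1 : H) ⊗ₜ[k] v)) *
        (u ⊗ₜ[k] (1 : H))) =
      auxG b v * auxF a u := by
  induction u using TensorProduct.induction_on with
  | zero =>
    rw [zero_tmul, mul_zero, map_zero]
    simp [auxF]
  | tmul x y =>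
    induction v using TensorProduct.induction_on with
    | zero =>
      rw [tmul_zero, map_zero, zero_mul, map_zero]
      simp [auxG]
    | tmul z w =>
      rw [TensorProduct.assoc_symm_tmul]
      rw [Algebra.TensorProduct.tmul_mul_tmul, Algebra.TensorProduct.tmul_mul_tmul]
      simp only [auxPhi_tmul, auxF_tmul, auxG_tmul, one_mul, mul_one]
      rw [smul_mul_assoc, mul_smul_comm]
    | add v₁ v₂ h₁ h₂ =>
      rw [tmul_add, map_add, add_mul, map_add, h₁, h₂, auxG_add, add_mul]
  | add u₁ u₂ h₁ h₂ =>
    rw [add_tmul, mul_add, map_add, h₁, h₂, auxF_add, mul_add]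

lemma PiL_eq_auxF (a : H) : PiL k H a = auxF a (Coalgebra.comul (R := k) (1 : H)) := by
  rfl

lemma PiR_eq_auxG (b : H) : PiR k H b = auxG b (Coalgebra.comul (R := k) (1 : H)) := by
  rfl

end Aux

/-- elements of `H^L = Im Π^L` commute with elements of `H^R = Im Π^R`. -/
theorem HL_commutes_HR [WeakBialgebra k H] :
    ∀ l ∈ LinearMap.range (PiL k H), ∀ h ∈ LinearMap.range (PiR k H),
      h * l = l * h := by
  rintro l ⟨a, rfl⟩ h ⟨b, rfl⟩
  have e := (WeakBialgebra.comul_one_left (k := k) (H := H)).symm.trans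
    (WeakBialgebra.comul_one_right (k := k) (H := H))
  have := congrArg (auxPhi (k := k) a b) e
  rw [key_left, key_right] at this
  rw [PiL_eq_auxF, PiR_eq_auxG]
  exact this.symm

end WeakHopfPaper
end

section
/- In a weak bialgebra H, for every h ∈ H and l ∈ H^R one has l^{(1)} h^{(1)} ⊗ l^{(2)} h^{(2)} = h^{(1)} ⊗ l h^{(2)} and h^{(1)} l^{(1)} ⊗ h^{(2)} l^{(2)} = h^{(1)} ⊗ h^{(2)} l. -/
set_option synthInstance.maxHeartbeats 1000000
set_option maxHeartbeats 1000000


open TensorProduct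

namespace WeakHopfPaper

variable (k H : Type*) [Field k] [Ring H] [Algebra k H] [Coalgebra k H]

section Aux

variable {k H}

local notation "ε" => Coalgebra.counit (R := k) (A := H)
local notation "Δ" => Coalgebra.comul (R := k) (A := H)

lemma one_tmul_mul (l : H) (t : H ⊗[k] H) :
    ((1 : H) ⊗ₜ[k] l) * t =
      TensorProduct.map LinearMap.id (LinearMap.mulLeft k l) t := by
  induction t using TensorProduct.induction_on with
  | zero => simp
  | tmul a b => simp [Algebra.TensorProduct.tmul_mul_tmul]
  | add x y hx hy => simp [mul_add, hx, hy]

lemma mul_one_tmul (l : H) (t : H ⊗[k] H) :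
    t * ((1 : H) ⊗ₜ[k] l) =
      TensorProduct.map LinearMap.id (LinearMap.mulRight k l) t := by
  induction t using TensorProduct.induction_on with
  | zero => simp
  | tmul a b => simp [Algebra.TensorProduct.tmul_mul_tmul]
  | add x y hx hy => simp [add_mul, hx, hy]

lemma comul_rid_map (u : H ⊗[k] H) :
    Δ ((TensorProduct.rid k H) ((TensorProduct.map LinearMap.id ε) u)) =
      (TensorProduct.rid k (H ⊗[k] H))
        ((TensorProduct.map Δ ε) u) := by
  induction u using TensorProduct.induction_on with
  | zero => simp only [map_zero]
  | tmul a b => simp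
  | add x y hx hy => simp [hx, hy]

lemma aux_left (g : H) (u v : H ⊗[k] H) :
    (TensorProduct.rid k (H ⊗[k] H))
      ((TensorProduct.map LinearMap.id (ε ∘ₗ LinearMap.mulLeft k g))
        ((u ⊗ₜ[k] (1 : H)) * ((TensorProduct.assoc k H H H).symm ((1 : H) ⊗ₜ[k] v)))) =
    u * ((1 : H) ⊗ₜ[k]
      (TensorProduct.rid k H) ((TensorProduct.map LinearMap.id ε) (((1 : H) ⊗ₜ[k] g) * v))) := by
  induction u using TensorProduct.induction_on with
  | zero => simp only [TensorProduct.zero_tmul, zero_mul, mul_zero, map_zero]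
  | add x y hx hy => simp [TensorProduct.add_tmul, add_mul, hx, hy]
  | tmul a b =>
    induction v using TensorProduct.induction_on with
    | zero => simp
    | add x y hx hy => simp [TensorProduct.tmul_add, mul_add, hx, hy]
    | tmul c d =>
      simp [Algebra.TensorProduct.tmul_mul_tmul, TensorProduct.tmul_smul,
        mul_smul_comm, smul_tmul']

lemma aux_right (g : H) (u v : H ⊗[k] H) :
    (TensorProduct.rid k (H ⊗[k] H))
      ((TensorProduct.map LinearMap.id (ε ∘ₗ LinearMap.mulLeft k g))
        (((TensorProduct.assoc k H H H).symm ((1 : H) ⊗ₜ[k] v)) * (u ⊗ₜ[k] (1 : H)))) =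
    ((1 : H) ⊗ₜ[k]
      (TensorProduct.rid k H) ((TensorProduct.map LinearMap.id ε) (((1 : H) ⊗ₜ[k] g) * v))) * u := by
  induction u using TensorProduct.induction_on with
  | zero => simp only [TensorProduct.zero_tmul, zero_mul, mul_zero, map_zero]
  | add x y hx hy => simp [TensorProduct.add_tmul, mul_add, hx, hy]
  | tmul a b =>
    induction v using TensorProduct.induction_on with
    | zero => simp
    | add x y hx hy => simp [TensorProduct.tmul_add, add_mul, mul_add, hx, hy]
    | tmul c d =>
      simp [Algebra.TensorProduct.tmul_mul_tmul, TensorProduct.tmul_smul,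
        mul_smul_comm, smul_tmul', smul_mul_assoc]

lemma PiR_apply (g : H) :
    PiR k H g =
      (TensorProduct.rid k H)
        ((TensorProduct.map LinearMap.id ε) (((1 : H) ⊗ₜ[k] g) * Δ (1 : H))) := by
  simp [PiR, LinearMap.mulRight_apply]

lemma comul_PiR_core (g : H) :
    Δ (PiR k H g) =
      (TensorProduct.rid k (H ⊗[k] H))
        ((TensorProduct.map LinearMap.id (ε ∘ₗ LinearMap.mulLeft k g))
          ((TensorProduct.map Δ LinearMap.id) (Δ (1 : H)))) := by
  rw [PiR_apply, comul_rid_map, one_tmul_mul]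
  have h1 : (TensorProduct.map Δ ε)
        ((TensorProduct.map LinearMap.id (LinearMap.mulLeft k g)) (Δ (1 : H))) =
      (TensorProduct.map LinearMap.id (ε ∘ₗ LinearMap.mulLeft k g))
        ((TensorProduct.map Δ LinearMap.id) (Δ (1 : H))) := by
    induction (Δ (1 : H)) using TensorProduct.induction_on with
    | zero => simp only [map_zero]
    | tmul a b => simp
    | add x y hx hy => simp only [map_add, hx, hy]
  rw [h1]

variable [WeakBialgebra k H]

lemma comul_PiR_left (g : H) :
    Δ (PiR k H g) = Δ (1 : H) * ((1 : H) ⊗ₜ[k] PiR k H g) := by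
  rw [comul_PiR_core, WeakBialgebra.comul_one_left, aux_left, PiR_apply]

lemma comul_PiR_right (g : H) :
    Δ (PiR k H g) = ((1 : H) ⊗ₜ[k] PiR k H g) * Δ (1 : H) := by
  rw [comul_PiR_core, WeakBialgebra.comul_one_right, aux_right, PiR_apply]

lemma comul_one_mul (h : H) : Δ (1 : H) * Δ h = Δ h := by
  have := WeakBialgebra.comul_mul (k := k) (H := H) 1 h
  rw [one_mul] at this; exact this.symm

lemma mul_comul_one (h : H) : Δ h * Δ (1 : H) = Δ h := by
  have := WeakBialgebra.comul_mul (k := k) (H := H) h 1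
  rw [mul_one] at this; exact this.symm

end Aux

/-- for `l ∈ H^R`:
`l⁽¹⁾h⁽¹⁾ ⊗ l⁽²⁾h⁽²⁾ = h⁽¹⁾ ⊗ l h⁽²⁾` and `h⁽¹⁾l⁽¹⁾ ⊗ h⁽²⁾l⁽²⁾ = h⁽¹⁾ ⊗ h⁽²⁾ l`. -/
theorem comul_mul_HR [WeakBialgebra k H] :
    ∀ (h : H), ∀ l ∈ LinearMap.range (PiR k H),
      (Coalgebra.comul (R := k) l * Coalgebra.comul (R := k) h =
        (TensorProduct.map LinearMap.id (LinearMap.mulLeft k l))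
          (Coalgebra.comul (R := k) h)) ∧
      (Coalgebra.comul (R := k) h * Coalgebra.comul (R := k) l =
        (TensorProduct.map LinearMap.id (LinearMap.mulRight k l))
          (Coalgebra.comul (R := k) h)) := by
  rintro h l ⟨g, rfl⟩
  constructor
  · rw [← one_tmul_mul, comul_PiR_right, mul_assoc, comul_one_mul]
  · rw [← mul_one_tmul, comul_PiR_left, ← mul_assoc, mul_comul_one]

end WeakHopfPaper
end

section
/- In a weak bialgebra H, for every h ∈ H and l ∈ H^L one has h^{(1)} l^{(1)} ⊗ h^{(2)} l^{(2)} = h^{(1)} l ⊗ h^{(2)} and l^{(1)} h^{(1)} ⊗ l^{(2)} h^{(2)} = l h^{(1)} ⊗ h^{(2)}. -/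
open TensorProduct

namespace WeakHopfPaper

variable (k H : Type*) [Field k] [Ring H] [Algebra k H] [Coalgebra k H]

section Aux

variable {k H}
variable [WeakBialgebra k H]

set_option linter.unusedSectionVars false
set_option synthInstance.maxHeartbeats 1000000
set_option maxHeartbeats 1000000
set_option maxRecDepth 10000

lemma mul_tmul_one_right (l : H) (z : H ⊗[k] H) :
    z * (l ⊗ₜ[k] (1 : H)) =
      (TensorProduct.map (LinearMap.mulRight k l) LinearMap.id) z := by
  induction z using TensorProduct.induction_on with
  | zero => simp
  | tmul a b => simp [Algebra.TensorProduct.tmul_mul_tmul]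
  | add u v hu hv => rw [add_mul, hu, hv, map_add]

lemma mul_tmul_one_left (l : H) (z : H ⊗[k] H) :
    (l ⊗ₜ[k] (1 : H)) * z =
      (TensorProduct.map (LinearMap.mulLeft k l) LinearMap.id) z := by
  induction z using TensorProduct.induction_on with
  | zero => simp
  | tmul a b => simp [Algebra.TensorProduct.tmul_mul_tmul]
  | add u v hu hv => rw [mul_add, hu, hv, map_add]

/-- collapse map `H ⊗ H → H`, `a ⊗ b ↦ ε(a x) b`. -/
noncomputable def Q (x : H) : H ⊗[k] H →ₗ[k] H :=
  (TensorProduct.lid k H).toLinearMap ∘ₗ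
    TensorProduct.map (Coalgebra.counit (R := k) ∘ₗ LinearMap.mulRight k x) LinearMap.id

lemma PiL_eq (x : H) : PiL k H x = Q x (Coalgebra.comul (R := k) (1 : H)) := by
  have key : ∀ v : H ⊗[k] H,
      (TensorProduct.lid k H)
        ((TensorProduct.map (Coalgebra.counit (R := k)) LinearMap.id) (v * (x ⊗ₜ[k] 1)))
      = Q x v := by
    intro v
    induction v using TensorProduct.induction_on with
    | zero => simp
    | tmul a b => simp [Q, Algebra.TensorProduct.tmul_mul_tmul]
    | add u v hu hv => rw [add_mul, map_add, map_add, hu, hv, map_add]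
  simpa [PiL, LinearMap.mulLeft_apply] using key (Coalgebra.comul (R := k) (1 : H))

/-- collapse map `H ⊗ (H ⊗ H) → H ⊗ H`, `a ⊗ w ↦ ε(a x) w`. -/
noncomputable def L (x : H) : H ⊗[k] (H ⊗[k] H) →ₗ[k] H ⊗[k] H :=
  (TensorProduct.lid k (H ⊗[k] H)).toLinearMap ∘ₗ
    TensorProduct.map (Coalgebra.counit (R := k) ∘ₗ LinearMap.mulRight k x) LinearMap.id

lemma claim1 (x : H) (v : H ⊗[k] H) :
    Coalgebra.comul (R := k) (Q x v) =
      L x ((LinearMap.lTensor H (Coalgebra.comul (R := k))) v) := by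
  induction v using TensorProduct.induction_on with
  | zero => simp
  | tmul a b => simp [Q, L]
  | add u v hu hv => rw [map_add, map_add, hu, hv, map_add, map_add]

lemma claim2 (x : H) (u v : H ⊗[k] H) :
    L x ((TensorProduct.assoc k H H H)
        (((TensorProduct.assoc k H H H).symm ((1 : H) ⊗ₜ[k] u)) * (v ⊗ₜ[k] (1 : H)))) =
      u * (Q x v ⊗ₜ[k] (1 : H)) := by
  induction u using TensorProduct.induction_on with
  | zero => rw [tmul_zero, map_zero, zero_mul, map_zero, map_zero, zero_mul]
  | tmul c d =>
    induction v using TensorProduct.induction_on with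
    | zero => simp
    | tmul a b =>
      rw [TensorProduct.assoc_symm_tmul, Algebra.TensorProduct.tmul_mul_tmul,
        Algebra.TensorProduct.tmul_mul_tmul, TensorProduct.assoc_tmul]
      simp [Q, L, Algebra.TensorProduct.tmul_mul_tmul, TensorProduct.smul_tmul',
        mul_smul_comm, smul_mul_assoc]
    | add u' v' hu hv =>
      rw [add_tmul, mul_add, map_add, map_add, hu, hv, map_add, ← mul_add, ← add_tmul]
  | add u' v' hu hv =>
    rw [tmul_add, map_add, add_mul, map_add, map_add, hu, hv, add_mul]

lemma claim2' (x : H) (u v : H ⊗[k] H) :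
    L x ((TensorProduct.assoc k H H H)
        ((v ⊗ₜ[k] (1 : H)) * ((TensorProduct.assoc k H H H).symm ((1 : H) ⊗ₜ[k] u)))) =
      (Q x v ⊗ₜ[k] (1 : H)) * u := by
  induction u using TensorProduct.induction_on with
  | zero => rw [tmul_zero, map_zero, mul_zero, map_zero, map_zero, mul_zero]
  | tmul c d =>
    induction v using TensorProduct.induction_on with
    | zero => simp
    | tmul a b =>
      rw [TensorProduct.assoc_symm_tmul, Algebra.TensorProduct.tmul_mul_tmul,
        Algebra.TensorProduct.tmul_mul_tmul, TensorProduct.assoc_tmul]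
      simp [Q, L, Algebra.TensorProduct.tmul_mul_tmul, TensorProduct.smul_tmul',
        mul_smul_comm, smul_mul_assoc]
    | add u' v' hu hv =>
      rw [add_tmul, add_mul, map_add, map_add, hu, hv, map_add, ← add_mul, ← add_tmul]
  | add u' v' hu hv =>
    rw [tmul_add, map_add, mul_add, map_add, map_add, hu, hv, mul_add]

lemma comul_PiL_right (x : H) :
    Coalgebra.comul (R := k) (PiL k H x) =
      Coalgebra.comul (R := k) (1 : H) * (PiL k H x ⊗ₜ[k] (1 : H)) := by
  set C := Coalgebra.comul (R := k) (1 : H) with hC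
  have h1 : (LinearMap.lTensor H (Coalgebra.comul (R := k))) C =
      (TensorProduct.assoc k H H H)
        ((TensorProduct.map (Coalgebra.comul (R := k)) LinearMap.id) C) := by
    have := (Coalgebra.coassoc_apply (R := k) (1 : H)).symm
    simpa [LinearMap.rTensor, hC] using this
  rw [PiL_eq, claim1, h1, WeakBialgebra.comul_one_right, claim2, ← PiL_eq]

lemma comul_PiL_left (x : H) :
    Coalgebra.comul (R := k) (PiL k H x) =
      (PiL k H x ⊗ₜ[k] (1 : H)) * Coalgebra.comul (R := k) (1 : H) := by
  set C := Coalgebra.comul (R := k) (1 : H) with hC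
  have h1 : (LinearMap.lTensor H (Coalgebra.comul (R := k))) C =
      (TensorProduct.assoc k H H H)
        ((TensorProduct.map (Coalgebra.comul (R := k)) LinearMap.id) C) := by
    have := (Coalgebra.coassoc_apply (R := k) (1 : H)).symm
    simpa [LinearMap.rTensor, hC] using this
  rw [PiL_eq, claim1, h1, WeakBialgebra.comul_one_left, claim2', ← PiL_eq]

lemma comul_mul_comul_one (h : H) :
    Coalgebra.comul (R := k) h * Coalgebra.comul (R := k) (1 : H) =
      Coalgebra.comul (R := k) h := by
  rw [← WeakBialgebra.comul_mul h 1, mul_one]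

lemma comul_one_mul_comul (h : H) :
    Coalgebra.comul (R := k) (1 : H) * Coalgebra.comul (R := k) h =
      Coalgebra.comul (R := k) h := by
  rw [← WeakBialgebra.comul_mul 1 h, one_mul]

end Aux

/-- for `l ∈ H^L`:
`h⁽¹⁾l⁽¹⁾ ⊗ h⁽²⁾l⁽²⁾ = h⁽¹⁾l ⊗ h⁽²⁾` and `l⁽¹⁾h⁽¹⁾ ⊗ l⁽²⁾h⁽²⁾ = l h⁽¹⁾ ⊗ h⁽²⁾`. -/
theorem comul_mul_HL [WeakBialgebra k H] :
    ∀ (h : H), ∀ l ∈ LinearMap.range (PiL k H),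
      (Coalgebra.comul (R := k) h * Coalgebra.comul (R := k) l =
        (TensorProduct.map (LinearMap.mulRight k l) LinearMap.id)
          (Coalgebra.comul (R := k) h)) ∧
      (Coalgebra.comul (R := k) l * Coalgebra.comul (R := k) h =
        (TensorProduct.map (LinearMap.mulLeft k l) LinearMap.id)
          (Coalgebra.comul (R := k) h)) := by
  intro h l hl
  obtain ⟨x, rfl⟩ := hl
  constructor
  · rw [comul_PiL_right, ← mul_assoc, comul_mul_comul_one, mul_tmul_one_right]
  · rw [comul_PiL_left, mul_assoc, comul_one_mul_comul, mul_tmul_one_left]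


end WeakHopfPaper
end

section
/- In a weak bialgebra H, for all h, m ∈ H and l ∈ H^L, the equality Π^L(h^{(1)} l) · Π^L(h^{(2)} m) = Π^L(h l m) holds. -/
open TensorProduct

set_option synthInstance.maxHeartbeats 400000
set_option maxHeartbeats 1000000
set_option linter.unusedSectionVars false

namespace WeakHopfPaper

variable (k H : Type*) [Field k] [Ring H] [Algebra k H] [Coalgebra k H]

section Aux

local notation "ε'" => (Coalgebra.counit (R := k) (A := H))
local notation "Δ'" => (Coalgebra.comul (R := k) (A := H))
local notation "E'" => (Coalgebra.comul (R := k) (1 : H))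
local notation "α'" => (TensorProduct.assoc k H H H)

/-- `theta h w = ε(h⁽¹⁾ w) h⁽²⁾`; note `PiL k H = theta k H 1`. -/
noncomputable def theta (h : H) : H →ₗ[k] H :=
  (TensorProduct.lid k H).toLinearMap
    ∘ₗ TensorProduct.map (Coalgebra.counit (R := k)) LinearMap.id
    ∘ₗ LinearMap.mulLeft k (Coalgebra.comul (R := k) h)
    ∘ₗ (TensorProduct.mk k H H).flip 1

lemma PiL_eq_theta_one : PiL k H = theta k H 1 := rfl

lemma theta_apply (h w : H) :
    theta k H h w =
      TensorProduct.lid k H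
        ((TensorProduct.map ε' LinearMap.id) (Δ' h * (w ⊗ₜ[k] (1 : H)))) := rfl

lemma PiL_apply (a : H) :
    PiL k H a =
      TensorProduct.lid k H
        ((TensorProduct.map ε' LinearMap.id) (E' * (a ⊗ₜ[k] (1 : H)))) := rfl

/- ------------------ generic helper lemmas (no weak bialgebra needed) ------------- -/

lemma lid_map_mulRight (w : H) (u : H ⊗[k] H) :
    TensorProduct.lid k H ((TensorProduct.map ε' LinearMap.id) (u * (w ⊗ₜ[k] (1 : H)))) =
      TensorProduct.lid k H
        ((TensorProduct.map (ε' ∘ₗ LinearMap.mulRight k w) LinearMap.id) u) := by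
  induction u using TensorProduct.induction_on with
  | zero => simp
  | tmul a b => simp [Algebra.TensorProduct.tmul_mul_tmul]
  | add x y hx hy => simp only [add_mul, map_add, hx, hy]

lemma lid_map_sandwich (z y : H) (u : H ⊗[k] H) :
    TensorProduct.lid k H ((TensorProduct.map ε' LinearMap.id)
        ((z ⊗ₜ[k] (1 : H)) * u * (y ⊗ₜ[k] (1 : H)))) =
      TensorProduct.lid k H
        ((TensorProduct.map (ε' ∘ₗ LinearMap.mulLeft k z ∘ₗ LinearMap.mulRight k y)
          LinearMap.id) u) := by
  induction u using TensorProduct.induction_on with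
  | zero => simp
  | tmul a b => simp [Algebra.TensorProduct.tmul_mul_tmul, mul_assoc]
  | add x y hx hy => simp only [add_mul, mul_add, map_add, hx, hy]

lemma apply_lid_map {M : Type*} [AddCommMonoid M] [Module k M]
    (f : H →ₗ[k] M) (φ : H →ₗ[k] k) (u : H ⊗[k] H) :
    f (TensorProduct.lid k H ((TensorProduct.map φ LinearMap.id) u)) =
      TensorProduct.lid k M ((TensorProduct.map φ f) u) := by
  induction u using TensorProduct.induction_on with
  | zero => simp
  | tmul a b => simp
  | add x y hx hy => simp only [map_add, hx, hy]

lemma lid_map_one_tmul_mul (h : H) (φ : H →ₗ[k] k) (u : H ⊗[k] H) :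
    TensorProduct.lid k H ((TensorProduct.map φ LinearMap.id) (((1 : H) ⊗ₜ[k] h) * u)) =
      h * TensorProduct.lid k H ((TensorProduct.map φ LinearMap.id) u) := by
  induction u using TensorProduct.induction_on with
  | zero => simp
  | tmul a b => simp [Algebra.TensorProduct.tmul_mul_tmul, mul_smul_comm]
  | add x y hx hy => simp only [mul_add, map_add, hx, hy]

lemma lid_map_assoc_mul (φ : H →ₗ[k] k) (u v : (H ⊗[k] H)) :
    TensorProduct.lid k (H ⊗[k] H) ((TensorProduct.map φ LinearMap.id)
        ((TensorProduct.assoc k H H H) (u ⊗ₜ[k] (1 : H)) * ((1 : H) ⊗ₜ[k] v))) =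
      ((TensorProduct.lid k H ((TensorProduct.map φ LinearMap.id) u)) ⊗ₜ[k] (1 : H)) * v := by
  induction u using TensorProduct.induction_on with
  | zero => simp
  | tmul a b =>
      simp only [TensorProduct.assoc_tmul, Algebra.TensorProduct.tmul_mul_tmul, one_mul, mul_one,
        TensorProduct.map_tmul, LinearMap.id_coe, id_eq, TensorProduct.lid_tmul]
      rw [← TensorProduct.smul_tmul', smul_mul_assoc]
  | add x y hx hy =>
      simp only [add_tmul, map_add, add_mul, hx, hy]

lemma lid_map_mul_one_tmul (c : H) (u : H ⊗[k] H) :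
    TensorProduct.lid k H ((TensorProduct.map ε' LinearMap.id) (u * ((1 : H) ⊗ₜ[k] c))) =
      TensorProduct.lid k H ((TensorProduct.map ε' LinearMap.id) u) * c := by
  induction u using TensorProduct.induction_on with
  | zero => simp
  | tmul a b => simp [Algebra.TensorProduct.tmul_mul_tmul, smul_mul_assoc]
  | add x y hx hy => simp only [add_mul, map_add, hx, hy]

lemma counit_mul_lid (a : H) (φ : H →ₗ[k] k) (u : H ⊗[k] H) :
    ε' (a * TensorProduct.lid k H ((TensorProduct.map φ LinearMap.id) u)) =
      LinearMap.mul' k k ((TensorProduct.map φ (ε' ∘ₗ LinearMap.mulLeft k a)) u) := by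
  induction u using TensorProduct.induction_on with
  | zero => simp
  | tmul x y => simp [mul_smul_comm, smul_eq_mul, mul_comm]
  | add x y hx hy => simp only [map_add, mul_add, hx, hy]

lemma mulk_map_comm (f g : H →ₗ[k] k) (u : H ⊗[k] H) :
    LinearMap.mul' k k ((TensorProduct.map f g) ((TensorProduct.comm k H H) u)) =
      LinearMap.mul' k k ((TensorProduct.map g f) u) := by
  induction u using TensorProduct.induction_on with
  | zero => simp
  | tmul x y => simp [mul_comm]
  | add x y hx hy => simp only [map_add, hx, hy]

lemma mulk_map_comm_tmul_mul (a z y : H) (u : H ⊗[k] H) :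
    LinearMap.mul' k k ((TensorProduct.map (ε' ∘ₗ LinearMap.mulLeft k a)
        (ε' ∘ₗ LinearMap.mulRight k y))
        ((TensorProduct.comm k H H) ((z ⊗ₜ[k] (1 : H)) * u))) =
      ε' (a * TensorProduct.lid k H
        ((TensorProduct.map (ε' ∘ₗ LinearMap.mulLeft k z ∘ₗ LinearMap.mulRight k y)
          LinearMap.id) u)) := by
  induction u using TensorProduct.induction_on with
  | zero => simp
  | tmul c d =>
      simp [Algebra.TensorProduct.tmul_mul_tmul, mul_smul_comm, smul_eq_mul, mul_assoc]
      ring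
  | add x y hx hy => simp only [mul_add, map_add, hx, hy]

lemma map_mulRight_pair (f g : H →ₗ[k] H) (l m : H) (u : H ⊗[k] H) :
    (TensorProduct.map (f ∘ₗ LinearMap.mulRight k l) (g ∘ₗ LinearMap.mulRight k m)) u =
      (TensorProduct.map f g) (u * (l ⊗ₜ[k] m)) := by
  induction u using TensorProduct.induction_on with
  | zero => simp
  | tmul a b => simp [Algebra.TensorProduct.tmul_mul_tmul]
  | add x y hx hy => simp only [add_mul, map_add, hx, hy]

lemma assoc_mul (u v : (H ⊗[k] H) ⊗[k] H) :
    (TensorProduct.assoc k H H H) (u * v) =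
      (TensorProduct.assoc k H H H) u * (TensorProduct.assoc k H H H) v :=
  map_mul (Algebra.TensorProduct.assoc k k k H H H) u v

lemma counit_collapse (a : H) :
    TensorProduct.lid k H ((TensorProduct.map ε' LinearMap.id) (Δ' a)) = a := by
  have h := Coalgebra.rTensor_counit_comul (R := k) a
  have : (TensorProduct.map ε' LinearMap.id) (Δ' a) = (1 : k) ⊗ₜ[k] a := h
  rw [this]
  simp

lemma mapId_counit_collapse (v : H ⊗[k] H) :
    (TensorProduct.map LinearMap.id
        ((TensorProduct.lid k H).toLinearMap ∘ₗ TensorProduct.map ε' LinearMap.id))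
      ((TensorProduct.map LinearMap.id Δ') v) = v := by
  induction v using TensorProduct.induction_on with
  | zero => simp
  | tmul a b => simp [counit_collapse]
  | add x y hx hy => simp only [map_add, hx, hy]

lemma map_id_theta (h : H) (u : H ⊗[k] H) :
    (TensorProduct.map LinearMap.id (theta k H h)) u =
      (TensorProduct.map LinearMap.id
        ((TensorProduct.lid k H).toLinearMap ∘ₗ TensorProduct.map ε' LinearMap.id))
        (((1 : H) ⊗ₜ[k] Δ' h) * (TensorProduct.assoc k H H H) (u ⊗ₜ[k] (1 : H))) := by
  induction u using TensorProduct.induction_on with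
  | zero => simp
  | tmul a b =>
      simp [Algebra.TensorProduct.tmul_mul_tmul, theta_apply]
  | add x y hx hy => simp only [add_tmul, map_add, mul_add, hx, hy]

/- ------------------ weak bialgebra lemmas ------------- -/

variable [WeakBialgebra k H]

lemma e_mul_comul (h : H) : E' * Δ' h = Δ' h := by
  rw [← WeakBialgebra.comul_mul, one_mul]

lemma comul_mul_e (h : H) : Δ' h * E' = Δ' h := by
  rw [← WeakBialgebra.comul_mul, mul_one]

lemma mapIdComul_mul (u v : H ⊗[k] H) :
    (TensorProduct.map LinearMap.id Δ') (u * v) =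
      (TensorProduct.map LinearMap.id Δ') u * (TensorProduct.map LinearMap.id Δ') v := by
  induction u using TensorProduct.induction_on with
  | zero => simp
  | tmul a b =>
      induction v using TensorProduct.induction_on with
      | zero => simp
      | tmul c d =>
          simp [Algebra.TensorProduct.tmul_mul_tmul, WeakBialgebra.comul_mul]
      | add x y hx hy => simp only [mul_add, map_add, hx, hy]
  | add x y hx hy => simp only [add_mul, map_add, hx, hy]

lemma FR :
    (TensorProduct.map LinearMap.id Δ') E' =
      ((1 : H) ⊗ₜ[k] E') * (TensorProduct.assoc k H H H) (E' ⊗ₜ[k] (1 : H)) := by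
  have h1 : (TensorProduct.assoc k H H H)
      ((TensorProduct.map Δ' LinearMap.id) E') = (TensorProduct.map LinearMap.id Δ') E' := by
    have := Coalgebra.coassoc_apply (R := k) (1 : H)
    simpa [LinearMap.rTensor, LinearMap.lTensor] using this
  rw [← h1, WeakBialgebra.comul_one_right, assoc_mul]
  simp

lemma FL :
    (TensorProduct.map LinearMap.id Δ') E' =
      (TensorProduct.assoc k H H H) (E' ⊗ₜ[k] (1 : H)) * ((1 : H) ⊗ₜ[k] E') := by
  have h1 : (TensorProduct.assoc k H H H)
      ((TensorProduct.map Δ' LinearMap.id) E') = (TensorProduct.map LinearMap.id Δ') E' := by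
    have := Coalgebra.coassoc_apply (R := k) (1 : H)
    simpa [LinearMap.rTensor, LinearMap.lTensor] using this
  rw [← h1, WeakBialgebra.comul_one_left, assoc_mul]
  simp

lemma D2 (h : H) :
    ((1 : H) ⊗ₜ[k] Δ' h) * (TensorProduct.assoc k H H H) (E' ⊗ₜ[k] (1 : H)) =
      (TensorProduct.map LinearMap.id Δ') (((1 : H) ⊗ₜ[k] h) * E') := by
  rw [mapIdComul_mul]
  have : (TensorProduct.map LinearMap.id Δ') ((1 : H) ⊗ₜ[k] h) = (1 : H) ⊗ₜ[k] Δ' h := by simp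
  rw [this, FR, ← mul_assoc, Algebra.TensorProduct.tmul_mul_tmul, one_mul, comul_mul_e]

lemma keyD (h : H) :
    (TensorProduct.map LinearMap.id (theta k H h)) E' = ((1 : H) ⊗ₜ[k] h) * E' := by
  rw [map_id_theta, D2, mapId_counit_collapse]

lemma G1 : (TensorProduct.map LinearMap.id (PiL k H)) E' = E' := by
  rw [PiL_eq_theta_one, keyD]
  rw [← Algebra.TensorProduct.one_def, one_mul]

lemma PiL_eq_s9 (x : H) :
    PiL k H x =
      TensorProduct.lid k H
        ((TensorProduct.map (ε' ∘ₗ LinearMap.mulRight k x) LinearMap.id) E') := by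
  rw [PiL_apply, lid_map_mulRight]

lemma map_phi_split {M : Type*} [AddCommMonoid M] [Module k M]
    (φ : H →ₗ[k] k) (f : H →ₗ[k] M) (u : H ⊗[k] H) :
    (TensorProduct.map φ f) u =
      (TensorProduct.map φ LinearMap.id) ((TensorProduct.map LinearMap.id f) u) := by
  conv_rhs => rw [← LinearMap.comp_apply, ← TensorProduct.map_comp]
  simp

lemma thetaC' (h x : H) : theta k H h (PiL k H x) = h * PiL k H x := by
  rw [PiL_eq_s9, apply_lid_map, map_phi_split, keyD, lid_map_one_tmul_mul]

lemma comul_PiL (x : H) :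
    Δ' (PiL k H x) = ((PiL k H x) ⊗ₜ[k] (1 : H)) * E' := by
  conv_lhs => rw [PiL_eq_s9, apply_lid_map, map_phi_split, FL, lid_map_assoc_mul]
  rw [← PiL_eq_s9]

lemma counit_mul_PiL (a y : H) : ε' (a * PiL k H y) = ε' (a * y) := by
  rw [PiL_eq_s9, counit_mul_lid]
  have h := WeakBialgebra.counit_right (k := k) (H := H) a 1 y
  rw [mul_one] at h
  rw [h, mulk_map_comm]

noncomputable def psi (z y : H) : H :=
  TensorProduct.lid k H
    ((TensorProduct.map (Coalgebra.counit (R := k) ∘ₗ LinearMap.mulLeft k z ∘ₗ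
      LinearMap.mulRight k y) LinearMap.id) (Coalgebra.comul (R := k) (1 : H)))

lemma psi_fix (z y : H) : PiL k H (psi k H z y) = psi k H z y := by
  unfold psi
  rw [apply_lid_map, map_phi_split, G1]

lemma counit_mul_psi (a x y : H) :
    ε' (a * (PiL k H x * y)) = ε' (a * psi k H (PiL k H x) y) := by
  have h := WeakBialgebra.counit_right (k := k) (H := H) a (PiL k H x) y
  rw [comul_PiL, mulk_map_comm_tmul_mul] at h
  rw [← mul_assoc]
  exact h

lemma A2 (x y : H) : PiL k H (PiL k H x * y) = psi k H (PiL k H x) y := by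
  have hfun : (ε' ∘ₗ LinearMap.mulRight k (PiL k H x * y)) =
      (ε' ∘ₗ LinearMap.mulRight k (psi k H (PiL k H x) y)) := by
    apply LinearMap.ext
    intro a
    simp only [LinearMap.comp_apply, LinearMap.mulRight_apply]
    exact counit_mul_psi k H a x y
  rw [PiL_eq_s9, hfun, ← PiL_eq_s9, psi_fix]

lemma Bprime (x y : H) : PiL k H x * PiL k H y = PiL k H (PiL k H x * y) := by
  have h1 : theta k H (PiL k H x) (PiL k H y) = PiL k H x * PiL k H y :=
    thetaC' k H (PiL k H x) y
  have h2 : theta k H (PiL k H x) (PiL k H y) = psi k H (PiL k H x) (PiL k H y) := by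
    rw [theta_apply, comul_PiL, lid_map_sandwich]
    rfl
  have h3 : psi k H (PiL k H x) (PiL k H y) = psi k H (PiL k H x) y := by
    unfold psi
    congr 1
    congr 1
    congr 1
    apply LinearMap.ext
    intro a
    simp only [LinearMap.comp_apply, LinearMap.mulRight_apply, LinearMap.mulLeft_apply]
    rw [← mul_assoc, counit_mul_PiL, mul_assoc]
  rw [← h1, h2, h3, ← A2]

lemma mu_map_PiL (u : H ⊗[k] H) :
    LinearMap.mul' k H ((TensorProduct.map (PiL k H) LinearMap.id) u) =
      TensorProduct.lid k H ((TensorProduct.map ε' LinearMap.id) (E' * u)) := by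
  induction u using TensorProduct.induction_on with
  | zero => simp
  | tmul a b =>
      have hsplit : E' * (a ⊗ₜ[k] b) = E' * (a ⊗ₜ[k] (1 : H)) * ((1 : H) ⊗ₜ[k] b) := by
        rw [mul_assoc, Algebra.TensorProduct.tmul_mul_tmul, mul_one, one_mul]
      rw [hsplit, lid_map_mul_one_tmul]
      simp [PiL_apply]
  | add x y hx hy => simp only [mul_add, map_add, hx, hy]

lemma mu_map_right (m : H) (u : H ⊗[k] H) :
    LinearMap.mul' k H ((TensorProduct.map (PiL k H) LinearMap.id)
        (u * ((1 : H) ⊗ₜ[k] m))) =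
      LinearMap.mul' k H ((TensorProduct.map (PiL k H) LinearMap.id) u) * m := by
  induction u using TensorProduct.induction_on with
  | zero => simp
  | tmul a b => simp [Algebra.TensorProduct.tmul_mul_tmul, mul_assoc]
  | add x y hx hy => simp only [add_mul, map_add, hx, hy]

lemma mu_map_PiL_PiL (u : H ⊗[k] H) :
    LinearMap.mul' k H ((TensorProduct.map (PiL k H) (PiL k H)) u) =
      PiL k H (LinearMap.mul' k H ((TensorProduct.map (PiL k H) LinearMap.id) u)) := by
  induction u using TensorProduct.induction_on with
  | zero => simp
  | tmul a b => simpa using Bprime k H a b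
  | add x y hx hy => simp only [map_add, hx, hy]

lemma Cfinal (h x : H) :
    LinearMap.mul' k H ((TensorProduct.map (PiL k H) LinearMap.id)
        (Δ' h * ((PiL k H x) ⊗ₜ[k] (1 : H)))) = h * PiL k H x := by
  rw [mu_map_PiL, ← mul_assoc, e_mul_comul]
  rw [← theta_apply, thetaC']

end Aux

/-- `Π^L(h⁽¹⁾ l) Π^L(h⁽²⁾ m) = Π^L(hlm)` for `l ∈ H^L`. -/
theorem PiL_mul_formula [WeakBialgebra k H] :
    ∀ (h m : H), ∀ l ∈ LinearMap.range (PiL k H),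
      LinearMap.mul' k H
        ((TensorProduct.map
          ((PiL k H) ∘ₗ LinearMap.mulRight k l)
          ((PiL k H) ∘ₗ LinearMap.mulRight k m))
          (Coalgebra.comul (R := k) h)) = PiL k H (h * l * m) := by
  rintro h m l ⟨x, rfl⟩
  rw [map_mulRight_pair, mu_map_PiL_PiL]
  have hsplit : Coalgebra.comul (R := k) h * ((PiL k H x) ⊗ₜ[k] m) =
      (Coalgebra.comul (R := k) h * ((PiL k H x) ⊗ₜ[k] (1 : H))) * ((1 : H) ⊗ₜ[k] m) := by
    rw [mul_assoc, Algebra.TensorProduct.tmul_mul_tmul, mul_one, one_mul]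
  rw [hsplit, mu_map_right, Cfinal]

end WeakHopfPaper
end
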